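/- Let (X_i)_{i ∈ ℕ} be an i.i.d. sequence of real-valued random variables, let a ≤ b be reals, and set p_L = P(X_1 < a), p_U = P(X_1 > b) and p_max = max(p_L, p_U). If p_max ≤ 0.169, then there exists a constant C > 0 such that for every odd positive integer t, P(Error_t) ≤ C · t^{-1/2} · 0.75^t. -/

import Mathlib

open MeasureTheory ProbabilityTheory

/-- The median of `t` reals: the `⌈t/2⌉`-th smallest among them. -/
noncomputable def median (t : ℕ) (x : Fin t → ℝ) : ℝ :=
  ((Finset.univ.val.map x).sort (· ≤ ·)).getD ((t + 1) / 2 - 1) 0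

/-- `Error_t`: the event that the median of `X_1, …, X_t` is `< a` or `> b`. -/
def errorEvent {Ω : Type*} (X : ℕ → Ω → ℝ) (a b : ℝ) (t : ℕ) : Set Ω :=
  {ω | median t (fun i : Fin t => X i ω) < a ∨ b < median t (fun i : Fin t => X i ω)}

lemma median_lt_count {t : ℕ} (ht : 0 < t) (x : Fin t → ℝ) {a : ℝ} (h : median t x < a) :
    (t + 1) / 2 ≤ (Finset.univ.filter (fun i => x i < a)).card := by
  classical
  set l := ((Finset.univ.val.map x).sort (· ≤ ·)) with hl
  have hlen : l.length = t := by
    simp [hl, Multiset.length_sort]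
  set k := (t + 1) / 2 with hk
  have hk1 : k - 1 < t := by omega
  have hkt : k ≤ t := by omega
  have hsorted : l.Pairwise (· ≤ ·) := Multiset.pairwise_sort _ _
  have hmed : median t x = l[k-1]'(by omega) := by
    rw [median]
    exact List.getD_eq_getElem l 0 (by omega)
  have htake : ∀ y ∈ l.take k, y < a := by
    intro y hy
    obtain ⟨i, hi, rfl⟩ := List.mem_iff_getElem.mp hy
    have hi' : i < k := by
      have := (List.length_take (i := k) (l := l)) ▸ hi
      omega
    rw [List.getElem_take]
    calc l[i]'(by omega) ≤ l[k-1]'(by omega) := by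
          rcases eq_or_lt_of_le (by omega : i ≤ k - 1) with h1 | h1
          · subst h1; exact le_refl _
          · exact hsorted.rel_get_of_lt (by simpa using h1)
      _ < a := hmed ▸ h
  have hcount : k ≤ l.countP (fun y => decide (y < a)) := by
    have h1 : (l.take k).countP (fun y => decide (y < a)) = (l.take k).length :=
      List.countP_eq_length.mpr (fun y hy => decide_eq_true (htake y hy))
    have h2 : l.countP (fun y => decide (y < a)) =
        (l.take k).countP (fun y => decide (y < a)) + (l.drop k).countP (fun y => decide (y < a)) := by
      rw [← List.countP_append, List.take_append_drop]
    rw [h2, h1, List.length_take]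
    omega
  have e1 : Multiset.countP (fun y => y < a) (Finset.univ.val.map x)
      = (Finset.univ.filter (fun i => x i < a)).card := by
    rw [Multiset.countP_map]
    rfl
  rw [← e1]
  have e2 : Multiset.countP (fun y => y < a) (Finset.univ.val.map x)
      = l.countP (fun y => decide (y < a)) := by
    conv_lhs => rw [← Multiset.sort_eq (Finset.univ.val.map x) (· ≤ ·)]
    exact Multiset.coe_countP _ _
  rw [e2]
  exact hcount

lemma median_gt_count {t : ℕ} (hodd : Odd t) (ht : 0 < t) (x : Fin t → ℝ) {b : ℝ}
    (h : b < median t x) :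
    (t + 1) / 2 ≤ (Finset.univ.filter (fun i => b < x i)).card := by
  classical
  set l := ((Finset.univ.val.map x).sort (· ≤ ·)) with hl
  have hlen : l.length = t := by
    simp [hl, Multiset.length_sort]
  set k := (t + 1) / 2 with hk
  obtain ⟨m, rfl⟩ := hodd
  have hkm : k = m + 1 := by omega
  have hk1 : k - 1 < 2 * m + 1 := by omega
  have hsorted : l.Pairwise (· ≤ ·) := Multiset.pairwise_sort _ _
  have hmed : median (2 * m + 1) x = l[k-1]'(by omega) := by
    rw [median]
    exact List.getD_eq_getElem l 0 (by omega)
  have hdrop : ∀ y ∈ l.drop (k - 1), b < y := by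
    intro y hy
    obtain ⟨i, hi, rfl⟩ := List.mem_iff_getElem.mp hy
    rw [List.getElem_drop]
    calc b < l[k-1]'(by omega) := hmed ▸ h
      _ ≤ l[k-1+i]'(by have := (List.length_drop (i := k-1) (l := l)) ▸ hi; omega) := by
          rcases Nat.eq_zero_or_pos i with h1 | h1
          · subst h1; exact le_refl _
          · exact hsorted.rel_get_of_lt (by simp; omega)
  have hcount : k ≤ l.countP (fun y => decide (b < y)) := by
    have h1 : (l.drop (k-1)).countP (fun y => decide (b < y)) = (l.drop (k-1)).length :=
      List.countP_eq_length.mpr (fun y hy => decide_eq_true (hdrop y hy))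
    have h2 : l.countP (fun y => decide (b < y)) =
        (l.take (k-1)).countP (fun y => decide (b < y))
          + (l.drop (k-1)).countP (fun y => decide (b < y)) := by
      rw [← List.countP_append, List.take_append_drop]
    rw [h2, h1, List.length_drop]
    omega
  have e1 : Multiset.countP (fun y => b < y) (Finset.univ.val.map x)
      = (Finset.univ.filter (fun i => b < x i)).card := by
    rw [Multiset.countP_map]
    rfl
  rw [← e1]
  have e2 : Multiset.countP (fun y => b < y) (Finset.univ.val.map x)
      = l.countP (fun y => decide (b < y)) := by
    conv_lhs => rw [← Multiset.sort_eq (Finset.univ.val.map x) (· ≤ ·)]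
    exact Multiset.coe_countP _ _
  rw [e2]
  exact hcount

lemma tail_bound {Ω : Type*} [MeasurableSpace Ω] (μ : Measure Ω) [IsProbabilityMeasure μ]
    (X : ℕ → Ω → ℝ) (hmeas : ∀ i, Measurable (X i))
    (hindep : iIndepFun X μ)
    (s : Set ℝ) (hs : MeasurableSet s)
    (hp : ∀ i, (μ (X i ⁻¹' s)).toReal ≤ 169/1000)
    (t k : ℕ) :
    (μ {ω | (k : ℝ) ≤ ∑ i : Fin t, s.indicator (fun _ => (1:ℝ)) (X i ω)}).toReal
      ≤ (169/831 : ℝ)^k * (1662/1000 : ℝ)^t := by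
  classical
  set g : ℝ → ℝ := s.indicator (fun _ => (1:ℝ)) with hg
  have hgmeas : Measurable g := measurable_const.indicator hs
  set Y : ℕ → Ω → ℝ := fun i => g ∘ X i with hY
  have hYmeas : ∀ i, Measurable (Y i) := fun i => hgmeas.comp (hmeas i)
  have hYindep : iIndepFun Y μ :=
    hindep.comp (fun _ => g) (fun _ => hgmeas)
  set c : ℝ := Real.log (831/169) with hc
  have hec : Real.exp c = 831/169 := Real.exp_log (by norm_num)
  have hc0 : 0 ≤ c := Real.log_nonneg (by norm_num)
  set S : Ω → ℝ := fun ω => ∑ i ∈ Finset.range t, Y i ω with hS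
  have hset : {ω | (k : ℝ) ≤ ∑ i : Fin t, s.indicator (fun _ => (1:ℝ)) (X i ω)}
      = {ω | (k : ℝ) ≤ S ω} := by
    ext ω
    simp only [Set.mem_setOf_eq, hS]
    rw [Fin.sum_univ_eq_sum_range (fun i => s.indicator (fun _ => (1:ℝ)) (X i ω)) t]
    rfl
  have hfun : ∀ i, (fun ω => Real.exp (c * Y i ω))
      = fun ω => (X i ⁻¹' s).indicator (fun _ => Real.exp c - 1) ω + 1 := by
    intro i
    funext ω
    by_cases hmem : X i ω ∈ s
    · simp [hY, hg, Set.indicator_of_mem, hmem, Set.mem_preimage, Function.comp]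
    · simp [hY, hg, Set.indicator_of_notMem, hmem, Set.mem_preimage, Function.comp]
  have hmgf : ∀ i, mgf (Y i) μ c ≤ 1662/1000 := by
    intro i
    rw [mgf]
    rw [hfun i]
    rw [integral_add ((integrable_const (Real.exp c - 1)).indicator ((hmeas i) hs))
      (integrable_const 1)]
    rw [integral_indicator_const _ ((hmeas i) hs), integral_const]
    simp only [Measure.real, measure_univ, ENNReal.toReal_one, smul_eq_mul, one_mul, one_smul]
    have h1 : (μ (X i ⁻¹' s)).toReal * (Real.exp c - 1) ≤ (169/1000) * (662/169) := by
      apply mul_le_mul (hp i) (by rw [hec]; norm_num) (by rw [hec]; norm_num)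
      norm_num
    linarith
  have hSle : ∀ ω, S ω ≤ t := by
    intro ω
    have h1 : ∀ i ∈ Finset.range t, Y i ω ≤ 1 := by
      intro i _
      simp only [hY, hg, Function.comp_apply]
      by_cases hmem : X i ω ∈ s <;> simp [Set.indicator_of_mem, Set.indicator_of_notMem, hmem]
    calc S ω ≤ ∑ i ∈ Finset.range t, (1:ℝ) := Finset.sum_le_sum h1
      _ = t := by simp
  have hSmeas : Measurable S := Finset.measurable_sum _ fun i _ => hYmeas i
  have hintS : Integrable (fun ω => Real.exp (c * S ω)) μ := by
    apply Integrable.mono' (integrable_const (Real.exp (c * t)))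
      (((hSmeas.const_mul c).exp).aestronglyMeasurable)
    filter_upwards with ω
    rw [Real.norm_eq_abs, Real.abs_exp]
    exact Real.exp_le_exp.mpr (mul_le_mul_of_nonneg_left (hSle ω) hc0)
  have hcher := measure_ge_le_exp_mul_mgf (X := S) (μ := μ) (k : ℝ) hc0 hintS
  rw [hset]
  refine hcher.trans ?_
  have hmgfS : mgf S μ c = ∏ i ∈ Finset.range t, mgf (Y i) μ c := by
    have := hYindep.mgf_sum hYmeas (Finset.range t) (t := c)
    rw [← this]
    congr 1
    funext ω
    simp [hS, Finset.sum_apply]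
  have hprod : mgf S μ c ≤ (1662/1000 : ℝ)^t := by
    rw [hmgfS]
    calc ∏ i ∈ Finset.range t, mgf (Y i) μ c
        ≤ ∏ _i ∈ Finset.range t, (1662/1000 : ℝ) :=
          Finset.prod_le_prod (fun i _ => mgf_nonneg) (fun i _ => hmgf i)
      _ = (1662/1000 : ℝ)^t := by rw [Finset.prod_const, Finset.card_range]
  have hexp : Real.exp (-c * k) = (169/831 : ℝ)^k := by
    rw [neg_mul, Real.exp_neg, mul_comm, Real.exp_nat_mul, hec, ← inv_pow]
    norm_num
  rw [hexp]
  exact mul_le_mul_of_nonneg_left hprod (by positivity)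

lemma aux_poly (n : ℕ) : (n + 1 : ℝ) * (561756/562500)^n ≤ 757 := by
  have h := one_add_mul_le_pow (by norm_num : (-2:ℝ) ≤ 744/561756) (n+1)
  have h1 : ((n:ℝ) + 1) * (744/561756) ≤ ((562500:ℝ)/561756)^(n+1) := by
    have e : (1:ℝ) + 744/561756 = 562500/561756 := by norm_num
    rw [← e]
    calc ((n:ℝ)+1) * (744/561756) ≤ 1 + ((n:ℕ)+1 : ℕ) * (744/561756) := by push_cast; linarith
      _ ≤ _ := h
  have hq : (0:ℝ) < (561756/562500:ℝ)^(n+1) := by positivity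
  have hmul : ((562500:ℝ)/561756)^(n+1) * (561756/562500)^(n+1) = 1 := by
    rw [← mul_pow]; norm_num
  have key : ((n:ℝ) + 1) * (744/561756) * (561756/562500)^(n+1) ≤ 1 := by
    calc ((n:ℝ) + 1) * (744/561756) * (561756/562500)^(n+1)
        ≤ ((562500:ℝ)/561756)^(n+1) * (561756/562500)^(n+1) :=
          mul_le_mul_of_nonneg_right h1 hq.le
      _ = 1 := hmul
  have e2 : (561756/562500:ℝ)^(n+1) = (561756/562500:ℝ)^n * (561756/562500) := pow_succ _ _
  rw [e2] at key
  nlinarith [pow_nonneg (by norm_num : (0:ℝ) ≤ 561756/562500) n]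

lemma aux_final (m : ℕ) :
    2 * ((169/831 : ℝ)^(m+1) * (1662/1000 : ℝ)^(2*m+1)) * (m + 1) ≤ 1000 * (3/4 : ℝ)^(2*m+1) := by
  have e1 : (169/831 : ℝ)^(m+1) * (1662/1000 : ℝ)^(2*m+1)
      = (338/1000) * ((169/831 : ℝ) * (1662/1000)^2)^m := by
    rw [pow_succ, pow_succ, pow_mul, mul_pow]
    ring
  have e1' : (169/831 : ℝ) * (1662/1000)^2 = 561756/1000000 := by norm_num
  have e2 : ((3:ℝ)/4)^(2*m+1) = (3/4) * (562500/1000000 : ℝ)^m := by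
    rw [pow_succ, pow_mul]
    norm_num
    ring
  have e3 : (561756/1000000 : ℝ)^m = (561756/562500 : ℝ)^m * (562500/1000000 : ℝ)^m := by
    rw [← mul_pow]; norm_num
  rw [e1, e1', e2, e3]
  have h := aux_poly m
  have hs : (0:ℝ) < (562500/1000000 : ℝ)^m := by positivity
  have h2 := mul_le_mul_of_nonneg_right h hs.le
  push_cast at h2 ⊢
  nlinarith [hs]

theorem stmt_5 {Ω : Type*} [MeasurableSpace Ω] (μ : Measure Ω) [IsProbabilityMeasure μ]
    (X : ℕ → Ω → ℝ) (hmeas : ∀ i, Measurable (X i))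
    (hindep : iIndepFun X μ)
    (hident : ∀ i, Measure.map (X i) μ = Measure.map (X 0) μ)
    (a b : ℝ) (hab : a ≤ b)
    (pL pU pmax : ℝ)
    (hpL : pL = (μ {ω | X 0 ω < a}).toReal)
    (hpU : pU = (μ {ω | b < X 0 ω}).toReal)
    (hpmax : pmax = max pL pU)
    (hbound : pmax ≤ 0.169) :
    ∃ C : ℝ, 0 < C ∧ ∀ t : ℕ, Odd t → 0 < t →
      (μ (errorEvent X a b t)).toReal ≤ C / Real.sqrt t * 0.75 ^ t := by
  classical
  refine ⟨1000, by norm_num, ?_⟩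
  intro t hodd hpos
  obtain ⟨m, hm⟩ := hodd
  have hm' : t = 2 * m + 1 := by omega
  set k := (t + 1) / 2 with hkdef
  have hk : k = m + 1 := by omega
  -- identical distributions
  have hsame : ∀ (i : ℕ) (s : Set ℝ), MeasurableSet s → μ (X i ⁻¹' s) = μ (X 0 ⁻¹' s) := by
    intro i s hs
    rw [← Measure.map_apply (hmeas i) hs, hident i, Measure.map_apply (hmeas 0) hs]
  have h169 : pmax ≤ 169/1000 := by
    refine hbound.trans (le_of_eq ?_)
    norm_num
  have hpL' : ∀ i, (μ (X i ⁻¹' Set.Iio a)).toReal ≤ 169/1000 := by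
    intro i
    rw [hsame i _ measurableSet_Iio]
    have e : (μ (X 0 ⁻¹' Set.Iio a)).toReal = pL := by rw [hpL]; rfl
    rw [e]
    exact (le_max_left pL pU).trans (hpmax ▸ h169)
  have hpU' : ∀ i, (μ (X i ⁻¹' Set.Ioi b)).toReal ≤ 169/1000 := by
    intro i
    rw [hsame i _ measurableSet_Ioi]
    have e : (μ (X 0 ⁻¹' Set.Ioi b)).toReal = pU := by rw [hpU]; rfl
    rw [e]
    exact (le_max_right pL pU).trans (hpmax ▸ h169)
  set A := {ω | (k : ℝ) ≤ ∑ i : Fin t, (Set.Iio a).indicator (fun _ => (1:ℝ)) (X i ω)} with hA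
  set B := {ω | (k : ℝ) ≤ ∑ i : Fin t, (Set.Ioi b).indicator (fun _ => (1:ℝ)) (X i ω)} with hB
  have hAle := tail_bound μ X hmeas hindep (Set.Iio a) measurableSet_Iio hpL' t k
  have hBle := tail_bound μ X hmeas hindep (Set.Ioi b) measurableSet_Ioi hpU' t k
  -- inclusion
  have hsub : errorEvent X a b t ⊆ A ∪ B := by
    intro ω hω
    have hsumA : ∑ i : Fin t, (Set.Iio a).indicator (fun _ => (1:ℝ)) (X i ω)
        = ((Finset.univ.filter (fun i : Fin t => X i ω < a)).card : ℝ) := by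
      rw [← Finset.sum_boole]
      refine Finset.sum_congr rfl (fun i _ => ?_)
      by_cases hmem : X i ω < a <;>
        simp [Set.indicator_of_mem, Set.indicator_of_notMem, Set.mem_Iio, hmem]
    have hsumB : ∑ i : Fin t, (Set.Ioi b).indicator (fun _ => (1:ℝ)) (X i ω)
        = ((Finset.univ.filter (fun i : Fin t => b < X i ω)).card : ℝ) := by
      rw [← Finset.sum_boole]
      refine Finset.sum_congr rfl (fun i _ => ?_)
      by_cases hmem : b < X i ω <;>
        simp [Set.indicator_of_mem, Set.indicator_of_notMem, Set.mem_Ioi, hmem]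
    rcases hω with hlt | hgt
    · left
      rw [hA, Set.mem_setOf_eq, hsumA]
      exact_mod_cast median_lt_count hpos _ hlt
    · right
      rw [hB, Set.mem_setOf_eq, hsumB]
      exact_mod_cast median_gt_count ⟨m, hm⟩ hpos _ hgt
  have hmain : (μ (errorEvent X a b t)).toReal ≤ (μ A).toReal + (μ B).toReal := by
    rw [← ENNReal.toReal_add (measure_ne_top μ A) (measure_ne_top μ B)]
    refine ENNReal.toReal_mono (ENNReal.add_ne_top.mpr ⟨measure_ne_top μ A, measure_ne_top μ B⟩) ?_
    exact (measure_mono hsub).trans (measure_union_le A B)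
  -- numeric finish
  have hD : (μ (errorEvent X a b t)).toReal
      ≤ 2 * ((169/831 : ℝ)^k * (1662/1000 : ℝ)^t) := by
    calc (μ (errorEvent X a b t)).toReal ≤ (μ A).toReal + (μ B).toReal := hmain
      _ ≤ (169/831 : ℝ)^k * (1662/1000 : ℝ)^t + (169/831 : ℝ)^k * (1662/1000 : ℝ)^t :=
          add_le_add hAle hBle
      _ = 2 * ((169/831 : ℝ)^k * (1662/1000 : ℝ)^t) := by ring
  have hsqpos : 0 < Real.sqrt t := Real.sqrt_pos.mpr (by exact_mod_cast hpos)
  have hsqle : Real.sqrt t ≤ (m : ℝ) + 1 := by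
    have h1 : Real.sqrt t ≤ Real.sqrt (((m:ℝ) + 1)^2) := by
      apply Real.sqrt_le_sqrt
      rw [hm']
      push_cast
      nlinarith
    rwa [Real.sqrt_sq (by positivity)] at h1
  have h075 : (0.75 : ℝ) = 3/4 := by norm_num
  rw [h075, div_mul_eq_mul_div, le_div_iff₀ hsqpos]
  calc (μ (errorEvent X a b t)).toReal * Real.sqrt t
      ≤ 2 * ((169/831 : ℝ)^k * (1662/1000 : ℝ)^t) * ((m : ℝ) + 1) := by
        apply mul_le_mul hD hsqle hsqpos.le
        positivity
    _ ≤ 1000 * (3/4 : ℝ)^t := by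
        rw [hk, hm']
        exact_mod_cast aux_final m
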